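/- A finite connected non-complete simple graph G of order n satisfies mobmv(G) = n − 1 if and only if G contains two adjacent hubs. -/

import Mathlib

open SimpleGraph

variable {V : Type*} {W : Type*}

/-- `S` is a general position set of `G`: no shortest path of `G` contains more than two
vertices of `S`. -/
def IsGenPosSet (G : SimpleGraph V) (S : Set V) : Prop :=
  ∀ ⦃u v : V⦄ (p : G.Walk u v), p.IsPath → p.length = G.dist u v →
    (S ∩ {x | x ∈ p.support}).ncard ≤ 2

/-- `S` is a mutual visibility set of `G`: any two vertices of `S` are joined by a shortest
path containing no further vertex of `S`. -/
def IsMutVisSet (G : SimpleGraph V) (S : Set V) : Prop :=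
  ∀ ⦃u⦄, u ∈ S → ∀ ⦃v⦄, v ∈ S → ∃ p : G.Walk u v,
    p.IsPath ∧ p.length = G.dist u v ∧ ∀ x ∈ p.support, x ∈ S → x = u ∨ x = v

/-- A legal move (with respect to the position property `P`) of a configuration of `t` robots
on distinct vertices: one robot moves to an adjacent unoccupied vertex, and the resulting set
of occupied vertices again satisfies `P`. -/
def LegalMove (G : SimpleGraph V) (P : Set V → Prop) {t : ℕ} (f g : Fin t ↪ V) : Prop :=
  ∃ i : Fin t, G.Adj (f i) (g i) ∧ g i ∉ Set.range ⇑f ∧ (∀ j, j ≠ i → g j = f j) ∧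
    P (Set.range ⇑g)

/-- A configuration is a mobile `P`-configuration if it satisfies `P` and there is a sequence
of legal moves starting from it such that every vertex is visited by some robot. -/
def IsMobileConfig (G : SimpleGraph V) (P : Set V → Prop) {t : ℕ} (f : Fin t ↪ V) : Prop :=
  P (Set.range ⇑f) ∧ ∃ (N : ℕ) (c : ℕ → (Fin t ↪ V)), c 0 = f ∧
    (∀ k < N, LegalMove G P (c k) (c (k + 1))) ∧ ∀ v : V, ∃ k ≤ N, ∃ i, c k i = v

/-- A configuration is completely mobile if it is mobile and moreover every robot can visit
every vertex via a sequence of legal moves. -/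
def IsCompletelyMobileConfig (G : SimpleGraph V) (P : Set V → Prop) {t : ℕ}
    (f : Fin t ↪ V) : Prop :=
  IsMobileConfig G P f ∧ ∀ (v : V) (i : Fin t), ∃ (N : ℕ) (c : ℕ → (Fin t ↪ V)), c 0 = f ∧
    (∀ k < N, LegalMove G P (c k) (c (k + 1))) ∧ ∃ k ≤ N, c k i = v

/-- The mobile general position number `mob(G)`. -/
noncomputable def mobGP (G : SimpleGraph V) : ℕ :=
  sSup {t : ℕ | ∃ f : Fin t ↪ V, IsMobileConfig G (IsGenPosSet G) f}

/-- The completely mobile general position number `mob*(G)`. -/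
noncomputable def cmobGP (G : SimpleGraph V) : ℕ :=
  sSup {t : ℕ | ∃ f : Fin t ↪ V, IsCompletelyMobileConfig G (IsGenPosSet G) f}

/-- The mobile mutual visibility number `mobmv(G)`. -/
noncomputable def mobMV (G : SimpleGraph V) : ℕ :=
  sSup {t : ℕ | ∃ f : Fin t ↪ V, IsMobileConfig G (IsMutVisSet G) f}

/-- The completely mobile mutual visibility number `mobmv*(G)`. -/
noncomputable def cmobMV (G : SimpleGraph V) : ℕ :=
  sSup {t : ℕ | ∃ f : Fin t ↪ V, IsCompletelyMobileConfig G (IsMutVisSet G) f}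

/-- The mutual visibility number `μ(G)`. -/
noncomputable def muMV (G : SimpleGraph V) : ℕ :=
  sSup {n : ℕ | ∃ S : Set V, IsMutVisSet G S ∧ S.ncard = n}

/-- `μ₂(G)`: the largest cardinality of a mutual visibility set whose vertices are pairwise at
distance at most `2`. -/
noncomputable def muMV2 (G : SimpleGraph V) : ℕ :=
  sSup {n : ℕ | ∃ S : Set V, IsMutVisSet G S ∧ (∀ u ∈ S, ∀ v ∈ S, G.dist u v ≤ 2) ∧
    S.ncard = n}

/-- The join `G ∨ H` of two graphs: the disjoint union together with all edges between the
two vertex sets. -/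
def graphJoin (G : SimpleGraph V) (H : SimpleGraph W) : SimpleGraph (V ⊕ W) where
  Adj x y := match x, y with
    | Sum.inl a, Sum.inl b => G.Adj a b
    | Sum.inr a, Sum.inr b => H.Adj a b
    | Sum.inl _, Sum.inr _ => True
    | Sum.inr _, Sum.inl _ => True
  symm := by refine ⟨?_⟩; rintro (a | a) (b | b) h <;> simp_all <;> exact h.symm
  loopless := by refine ⟨?_⟩; rintro (a | a) h <;> simp_all

/-- The strong product `G ⊠ H` of two graphs. -/
def strongProd (G : SimpleGraph V) (H : SimpleGraph W) : SimpleGraph (V × W) where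
  Adj x y := (x.1 = y.1 ∧ H.Adj x.2 y.2) ∨ (x.2 = y.2 ∧ G.Adj x.1 y.1) ∨
    (G.Adj x.1 y.1 ∧ H.Adj x.2 y.2)
  symm := by
    refine ⟨?_⟩
    rintro ⟨a, b⟩ ⟨c, d⟩ (⟨h1, h2⟩ | ⟨h1, h2⟩ | ⟨h1, h2⟩)
    · exact Or.inl ⟨h1.symm, h2.symm⟩
    · exact Or.inr (Or.inl ⟨h1.symm, h2.symm⟩)
    · exact Or.inr (Or.inr ⟨h1.symm, h2.symm⟩)
  loopless := by refine ⟨?_⟩; rintro ⟨a, b⟩ (⟨_, h⟩ | ⟨_, h⟩ | ⟨h, _⟩) <;> simp_all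

/-- A vertex `u` is a hub if any two distinct non-adjacent vertices different from `u` are
both adjacent to `u`. -/
def IsHub (G : SimpleGraph V) (u : V) : Prop :=
  ∀ ⦃w₁ w₂ : V⦄, w₁ ≠ u → w₂ ≠ u → w₁ ≠ w₂ → ¬G.Adj w₁ w₂ → G.Adj w₁ u ∧ G.Adj w₂ u

/-- A block graph: every block is complete; equivalently, the vertices of any cycle form a
clique. -/
def IsBlockGraph (G : SimpleGraph V) : Prop :=
  ∀ (v : V) (c : G.Walk v v), c.IsCycle → G.IsClique {x | x ∈ c.support}

/-- The graph obtained from the complete graph `K n` (on vertices `1, ..., n`) by attaching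
one pendant vertex `0`, adjacent only to vertex `1`. -/
def cliqueWithLeaf (n : ℕ) : SimpleGraph (Fin (n + 1)) :=
  SimpleGraph.fromRel (fun i j => (i ≠ 0 ∧ j ≠ 0) ∨ (i = 0 ∧ j = 1))

/-- `G` is (isomorphic to) a path graph. -/
def IsPathGraph (G : SimpleGraph V) : Prop :=
  ∃ n : ℕ, Nonempty (G ≃g pathGraph n)

section Aux

variable {V : Type*}

/-- The middle vertex of a path of length ≥ 2 differs from both endpoints. -/
lemma middle_ne {G : SimpleGraph V} {w₁ b c w₂ : V} {h₁ : G.Adj w₁ b} {h₂ : G.Adj b c}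
    {r : G.Walk c w₂} (hp : (Walk.cons h₁ (Walk.cons h₂ r)).IsPath) : b ≠ w₁ ∧ b ≠ w₂ := by
  rw [Walk.cons_isPath_iff] at hp
  obtain ⟨hp1, hw1⟩ := hp
  rw [Walk.cons_isPath_iff] at hp1
  obtain ⟨hp2, hb⟩ := hp1
  constructor
  · rintro rfl
    exact hw1 (Walk.start_mem_support _)
  · rintro rfl
    exact hb (Walk.end_mem_support _)

/-- If the complement of a singleton is a mutual visibility set, the vertex is a hub. -/
lemma hub_of_mutVis_compl {G : SimpleGraph V} {u : V}
    (h : IsMutVisSet G ({u}ᶜ : Set V)) : IsHub G u := by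
  intro w₁ w₂ h1 h2 hne hadj
  have hw1 : w₁ ∈ ({u}ᶜ : Set V) := h1
  have hw2 : w₂ ∈ ({u}ᶜ : Set V) := h2
  obtain ⟨p, hp, _, hsupp⟩ := h hw1 hw2
  cases p with
  | nil => exact absurd rfl hne
  | @cons _ b' _ h₁ q =>
    cases q with
    | nil => exact absurd h₁ hadj
    | @cons _ c' _ h₂ r =>
      -- b' is the middle vertex; show b' = u
      obtain ⟨hb1, hb2⟩ := middle_ne hp
      have hbmem : b' ∈ (Walk.cons h₁ (Walk.cons h₂ r)).support := by
        simp [Walk.support_cons]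
      have hbu : b' = u := by
        by_contra hb
        rcases hsupp b' hbmem hb with rfl | rfl
        · exact hb1 rfl
        · exact hb2 rfl
      cases r with
      | nil => exact ⟨hbu ▸ h₁, (hbu ▸ h₂).symm⟩
      | @cons _ c'' _ h₃ s =>
        -- the next vertex c' is also internal and also must be u : contradiction
        exfalso
        rw [Walk.cons_isPath_iff] at hp
        obtain ⟨hp1, hw1'⟩ := hp
        have hc1 : c' ≠ w₁ := by
          rintro rfl
          exact hw1' (by simp [Walk.support_cons])
        obtain ⟨_, hc2⟩ := middle_ne hp1
        have hcmem : c' ∈ (Walk.cons h₁ (Walk.cons h₂ (Walk.cons h₃ s))).support := by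
          simp [Walk.support_cons]
        have hcu : c' = u := by
          by_contra hc
          rcases hsupp c' hcmem hc with rfl | rfl
          · exact hc1 rfl
          · exact hc2 rfl
        rw [Walk.cons_isPath_iff, Walk.cons_isPath_iff] at hp1
        exact hp1.2 ((hcu.trans hbu.symm) ▸ Walk.start_mem_support (Walk.cons h₃ s))

/-- If `u` is a hub of a connected graph, the complement of `{u}` is a mutual visibility set. -/
lemma mutVis_compl_of_hub {G : SimpleGraph V} (hconn : G.Connected) {u : V}
    (hu : IsHub G u) : IsMutVisSet G ({u}ᶜ : Set V) := by
  intro x hx y hy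
  by_cases hxy : x = y
  · subst hxy
    refine ⟨Walk.nil, Walk.IsPath.nil, by simp [SimpleGraph.dist_self], ?_⟩
    intro z hz _
    left
    simpa using hz
  by_cases hadj : G.Adj x y
  · refine ⟨Walk.cons hadj Walk.nil, ?_, ?_, ?_⟩
    · simp [Walk.cons_isPath_iff, hadj.ne]
    · simp [SimpleGraph.dist_eq_one_iff_adj.mpr hadj]
    · intro z hz _
      simpa [Walk.support_cons] using hz
  · obtain ⟨hxu, hyu⟩ := hu hx hy hxy hadj
    refine ⟨Walk.cons hxu (Walk.cons hyu.symm Walk.nil), ?_, ?_, ?_⟩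
    · have hxu' : x ≠ u := hx
      have hyu' : y ≠ u := hy
      simp [Walk.cons_isPath_iff, hxy, hxu', Ne.symm hyu']
    · have hle : G.dist x y ≤ 2 := by
        have := SimpleGraph.dist_le (Walk.cons hxu (Walk.cons hyu.symm Walk.nil))
        simpa using this
      have h0 : 0 < G.dist x y := hconn.pos_dist_of_ne hxy
      have h1 : G.dist x y ≠ 1 := fun h => hadj (SimpleGraph.dist_eq_one_iff_adj.mp h)
      simp only [Walk.length_cons, Walk.length_nil]
      omega
    · intro z hz hzS
      simp only [Walk.support_cons, Walk.support_nil, List.mem_cons, List.mem_singleton] at hz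
      rcases hz with rfl | rfl | rfl | h
      · exact Or.inl rfl
      · exact absurd rfl hzS
      · exact Or.inr rfl
      · simp at h

lemma ncard_range_emb [Fintype V] {t : ℕ} (f : Fin t ↪ V) :
    (Set.range ⇑f).ncard = t := by
  rw [← Nat.card_coe_set_eq, Nat.card_congr (Equiv.ofInjective ⇑f f.injective).symm]
  simp

/-- Upper bound: any mutual-visibility configuration on a non-complete graph has
at most `n - 1` robots. -/
lemma mv_emb_le [Fintype V] {G : SimpleGraph V} (hnc : G ≠ ⊤) {t : ℕ} (f : Fin t ↪ V)
    (h : IsMutVisSet G (Set.range ⇑f)) : t ≤ Fintype.card V - 1 := by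
  have htle : t ≤ Fintype.card V := by
    simpa using Fintype.card_le_of_embedding f
  rcases Nat.lt_or_ge t (Fintype.card V) with hlt | hge
  · omega
  · exfalso
    have hteq : t = Fintype.card V := le_antisymm htle hge
    have hsurj : Function.Surjective ⇑f := by
      have : Function.Bijective ⇑f := (Fintype.bijective_iff_injective_and_card ⇑f).mpr
        ⟨f.injective, by simpa using hteq⟩
      exact this.2
    have hrange : Set.range ⇑f = Set.univ := Set.range_eq_univ.mpr hsurj
    obtain ⟨x, y, hxy, hnadj⟩ : ∃ x y : V, x ≠ y ∧ ¬G.Adj x y := by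
      by_contra hc
      push_neg at hc
      apply hnc
      ext a b
      simp only [SimpleGraph.top_adj]
      exact ⟨fun h => h.ne, fun h => hc a b h⟩
    have hxS : x ∈ Set.range ⇑f := hrange ▸ Set.mem_univ x
    have hyS : y ∈ Set.range ⇑f := hrange ▸ Set.mem_univ y
    obtain ⟨p, hp, _, hsupp⟩ := h hxS hyS
    cases p with
    | nil => exact hxy rfl
    | @cons _ b' _ h₁ q =>
      cases q with
      | nil => exact hnadj h₁
      | @cons _ c' _ h₂ r =>
        obtain ⟨hb1, hb2⟩ := middle_ne hp
        have hbmem : b' ∈ (Walk.cons h₁ (Walk.cons h₂ r)).support := by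
          simp [Walk.support_cons]
        rcases hsupp b' hbmem (hrange ▸ Set.mem_univ b') with rfl | rfl
        · exact hb1 rfl
        · exact hb2 rfl

lemma compl_range_eq_singleton [Fintype V] {t : ℕ} (f : Fin t ↪ V)
    (ht : t + 1 = Fintype.card V) : ∃ u : V, (Set.range ⇑f)ᶜ = {u} := by
  have h1 : (Set.range ⇑f).ncard + (Set.range ⇑f)ᶜ.ncard = Fintype.card V := by
    rw [Set.ncard_add_ncard_compl, Nat.card_eq_fintype_card]
  rw [ncard_range_emb] at h1
  have : (Set.range ⇑f)ᶜ.ncard = 1 := by omega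
  exact Set.ncard_eq_one.mp this

end Aux

theorem stmt_4 {V : Type*} [Fintype V] (G : SimpleGraph V) (hconn : G.Connected)
    (hnc : G ≠ ⊤) :
    mobMV G = Fintype.card V - 1 ↔ ∃ u v : V, G.Adj u v ∧ IsHub G u ∧ IsHub G v := by
  classical
  have hn2 : 2 ≤ Fintype.card V := by
    have h1 : 1 ≤ Fintype.card V := Fintype.card_pos_iff.mpr hconn.nonempty
    rcases Nat.lt_or_ge (Fintype.card V) 2 with h | h
    · exfalso
      have hc1 : Fintype.card V = 1 := by omega
      obtain ⟨x, hx⟩ := Fintype.card_eq_one_iff.mp hc1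
      apply hnc
      ext a b
      have hab : a = b := (hx a).trans (hx b).symm
      subst hab
      simp
    · exact h
  have hbdd : BddAbove {t : ℕ | ∃ f : Fin t ↪ V, IsMobileConfig G (IsMutVisSet G) f} := by
    refine ⟨Fintype.card V, ?_⟩
    rintro t ⟨f, _⟩
    simpa using Fintype.card_le_of_embedding f
  constructor
  · intro hmob
    have hne : {t : ℕ | ∃ f : Fin t ↪ V, IsMobileConfig G (IsMutVisSet G) f}.Nonempty := by
      by_contra hemp
      rw [Set.not_nonempty_iff_eq_empty] at hemp
      rw [mobMV, hemp, csSup_empty] at hmob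
      have hb0 : (⊥ : ℕ) = 0 := rfl
      omega
    have hmem : mobMV G ∈ {t : ℕ | ∃ f : Fin t ↪ V, IsMobileConfig G (IsMutVisSet G) f} :=
      Nat.sSup_mem hne hbdd
    rw [hmob] at hmem
    obtain ⟨f, hP, N, c, hc0, hmoves, hvisit⟩ := hmem
    obtain ⟨u₀, hu₀⟩ := compl_range_eq_singleton f (by omega)
    have hu₀nr : u₀ ∉ Set.range ⇑f := by
      rw [← Set.mem_compl_iff, hu₀]
      rfl
    have hN : 0 < N := by
      by_contra hN0
      push_neg at hN0
      obtain ⟨k, hk, i, hki⟩ := hvisit u₀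
      have hk0 : k = 0 := by omega
      subst hk0
      rw [hc0] at hki
      exact hu₀nr ⟨i, hki⟩
    obtain ⟨i, hadj, hnin, hfix, hPnew⟩ := hmoves 0 hN
    have hgi : c 1 i = u₀ := by
      have h' : c 1 i ∈ (Set.range ⇑f)ᶜ := by
        rw [← hc0]
        exact hnin
      rw [hu₀] at h'
      exact h'
    have hadj' : G.Adj (f i) u₀ := by
      rw [← hgi, ← hc0]
      exact hadj
    have hhub₀ : IsHub G u₀ := by
      apply hub_of_mutVis_compl (G := G) (u := u₀)
      have hcc : ({u₀}ᶜ : Set V) = Set.range ⇑f := by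
        rw [← hu₀, compl_compl]
      rw [hcc]
      exact hP
    obtain ⟨w, hw⟩ := compl_range_eq_singleton (c 1) (by omega)
    have hfi_not : f i ∉ Set.range ⇑(c 1) := by
      rintro ⟨j, hj⟩
      by_cases hji : j = i
      · subst hji
        rw [hgi] at hj
        exact hadj'.ne hj.symm
      · have hj' : c 1 j = f j := by
          rw [hfix j hji, hc0]
        rw [hj'] at hj
        exact hji (f.injective hj)
    have hwfi : w = f i := by
      have hmem' : f i ∈ ({w} : Set V) := by
        rw [← hw]
        exact hfi_not
      exact hmem'.symm
    have hhub₁ : IsHub G (f i) := by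
      apply hub_of_mutVis_compl (G := G) (u := f i)
      have hcc : ({f i}ᶜ : Set V) = Set.range ⇑(c 1) := by
        rw [← hwfi, ← hw, compl_compl]
      rw [hcc]
      exact hPnew
    exact ⟨u₀, f i, hadj'.symm, hhub₀, hhub₁⟩
  · rintro ⟨u, v, huv, hu, hv⟩
    have hcard : Fintype.card ({u}ᶜ : Set V) = Fintype.card V - 1 := by
      rw [Fintype.card_compl_set]
      simp
    let e : ({u}ᶜ : Set V) ≃ Fin (Fintype.card V - 1) := Fintype.equivFinOfCardEq hcard
    let f : Fin (Fintype.card V - 1) ↪ V :=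
      ⟨fun i => (e.symm i : V), fun a b h => e.symm.injective (Subtype.ext h)⟩
    have hrange : Set.range ⇑f = ({u}ᶜ : Set V) := by
      ext x
      constructor
      · rintro ⟨i, rfl⟩
        exact (e.symm i).2
      · intro hx
        exact ⟨e ⟨x, hx⟩, by show ((e.symm (e ⟨x, hx⟩) : V)) = x; simp⟩
    have hvne : v ≠ u := huv.ne'
    have hvmem : v ∈ ({u}ᶜ : Set V) := hvne
    set i₀ := e ⟨v, hvmem⟩ with hi₀
    have hfi₀ : f i₀ = v := by show ((e.symm i₀ : V)) = v; simp [hi₀]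
    have hne_u : ∀ j, f j ≠ u := by
      intro j
      have h2 : (e.symm j : V) ∈ ({u}ᶜ : Set V) := (e.symm j).2
      rw [Set.mem_compl_iff, Set.mem_singleton_iff] at h2
      exact h2
    let g : Fin (Fintype.card V - 1) ↪ V :=
      ⟨fun j => if j = i₀ then u else f j, by
        intro a b h
        have h' : (if a = i₀ then u else f a) = (if b = i₀ then u else f b) := h
        by_cases ha : a = i₀ <;> by_cases hb : b = i₀
        · rw [ha, hb]
        · rw [if_pos ha, if_neg hb] at h'
          exact absurd h'.symm (hne_u b)
        · rw [if_neg ha, if_pos hb] at h'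
          exact absurd h' (hne_u a)
        · rw [if_neg ha, if_neg hb] at h'
          exact f.injective h'⟩
    have hgdef : ∀ j, g j = if j = i₀ then u else f j := fun j => rfl
    have hgrange : Set.range ⇑g = ({v}ᶜ : Set V) := by
      ext x
      simp only [Set.mem_range, Set.mem_compl_iff, Set.mem_singleton_iff]
      constructor
      · rintro ⟨j, rfl⟩
        rw [hgdef]
        by_cases hj : j = i₀
        · rw [if_pos hj]
          exact huv.ne
        · rw [if_neg hj]
          intro hfv
          exact hj (f.injective (hfv.trans hfi₀.symm))
      · intro hx
        by_cases hxu : x = u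
        · exact ⟨i₀, by rw [hgdef, if_pos rfl, hxu]⟩
        · have hxr : x ∈ Set.range ⇑f := by
            rw [hrange]
            exact hxu
          obtain ⟨j, hj⟩ := hxr
          have hji : j ≠ i₀ := by
            intro hj'
            rw [hj', hfi₀] at hj
            exact hx hj.symm
          exact ⟨j, by rw [hgdef, if_neg hji, hj]⟩
    have hSu : IsMutVisSet G ({u}ᶜ : Set V) := mutVis_compl_of_hub hconn hu
    have hSv : IsMutVisSet G ({v}ᶜ : Set V) := mutVis_compl_of_hub hconn hv
    have hmemset : (Fintype.card V - 1) ∈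
        {t : ℕ | ∃ f : Fin t ↪ V, IsMobileConfig G (IsMutVisSet G) f} := by
      refine ⟨f, ?_, 1, fun k => if k = 0 then f else g, rfl, ?_, ?_⟩
      · rw [hrange]
        exact hSu
      · intro k hk
        have hk0 : k = 0 := by omega
        subst hk0
        show LegalMove G (IsMutVisSet G) f g
        refine ⟨i₀, ?_, ?_, ?_, ?_⟩
        · rw [hfi₀, hgdef, if_pos rfl]
          exact huv.symm
        · rw [hgdef, if_pos rfl, hrange]
          simp
        · intro j hj
          rw [hgdef, if_neg hj]
        · rw [hgrange]
          exact hSv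
      · intro w
        by_cases hwu : w = u
        · refine ⟨1, le_refl 1, i₀, ?_⟩
          show g i₀ = w
          rw [hgdef, if_pos rfl, hwu]
        · have hwr : w ∈ Set.range ⇑f := by
            rw [hrange]
            exact hwu
          obtain ⟨j, hj⟩ := hwr
          exact ⟨0, by omega, j, hj⟩
    rw [mobMV]
    apply le_antisymm
    · apply csSup_le'
      rintro t ⟨f', hf'⟩
      exact mv_emb_le hnc f' hf'.1
    · exact le_csSup hbdd hmemset
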